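/- Let 0 ≤ L < 1 and ξ > 0. Define p* = sup{ p ∈ [0,1] : kl(L‖p) ≤ ξ }. Then p* = inf_{C>0} (1 - exp(-C·L - ξ)) / (1 - e^{-C}). -/

import Mathlib

lemma aux_log_ratio (q s : ℝ) (hq : 0 ≤ q) (hs : 0 < s) : q - s ≤ q * Real.log (q / s) := by
  rcases eq_or_lt_of_le hq with h | h
  · simp [← h]; linarith
  · have h1 : Real.log (s / q) ≤ s / q - 1 := Real.log_le_sub_one_of_pos (by positivity)
    have h2 : Real.log (q / s) = -Real.log (s / q) := by
      rw [← Real.log_inv, inv_div]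
    rw [h2]
    have := mul_le_mul_of_nonneg_left h1 hq
    rw [mul_sub, mul_div_cancel₀ _ (ne_of_gt h)] at this
    nlinarith

lemma aux_kl_nonneg (L s : ℝ) (hL0 : 0 ≤ L) (hL1 : L ≤ 1) (hs0 : 0 < s) (hs1 : s < 1) :
    0 ≤ L * Real.log (L / s) + (1 - L) * Real.log ((1 - L) / (1 - s)) := by
  have h1 := aux_log_ratio L s hL0 hs0
  have h2 := aux_log_ratio (1 - L) (1 - s) (by linarith) (by linarith)
  linarith

lemma aux_dv (L p C : ℝ) (hL0 : 0 ≤ L) (hL1 : L < 1) (hp0 : 0 < p) (hp1 : p < 1) :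
    0 ≤ L * Real.log (L / p) + (1 - L) * Real.log ((1 - L) / (1 - p)) + C * L
        + Real.log (1 - p + p * Real.exp (-C)) := by
  have ha : 0 < p * Real.exp (-C) := by positivity
  have hb : 0 < 1 - p := by linarith
  have hD : 0 < 1 - p + p * Real.exp (-C) := by linarith
  set a := p * Real.exp (-C) with ha_def
  set D := 1 - p + a with hD_def
  rcases eq_or_lt_of_le hL0 with h | hLpos
  · have : Real.log (1 - p) ≤ Real.log D := Real.log_le_log hb (by linarith)
    have hlog : Real.log (1 / (1 - p)) = -Real.log (1 - p) := by
      rw [one_div, Real.log_inv]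
    rw [← h]
    simp only [zero_mul, mul_zero, sub_zero, one_mul, zero_div]
    rw [hlog]
    linarith
  · have hs0 : 0 < a / D := div_pos ha hD
    have hs1 : a / D < 1 := by rw [div_lt_one hD]; linarith
    have hmain := aux_kl_nonneg L (a / D) hL0 hL1.le hs0 hs1
    have h1s : 1 - a / D = (1 - p) / D := by field_simp; ring
    rw [h1s] at hmain
    have e1 : Real.log (L / (a / D)) = Real.log L - Real.log p + C + Real.log D := by
      rw [div_div_eq_mul_div, Real.log_div (mul_pos hLpos hD).ne' (ne_of_gt ha),
        Real.log_mul (ne_of_gt hLpos) (ne_of_gt hD), ha_def,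
        Real.log_mul (ne_of_gt hp0) (Real.exp_ne_zero _), Real.log_exp]
      ring
    have e2 : Real.log ((1 - L) / ((1 - p) / D)) = Real.log (1 - L) - Real.log (1 - p) + Real.log D := by
      rw [div_div_eq_mul_div, Real.log_div (mul_pos (by linarith : (0:ℝ) < 1 - L) hD).ne' (ne_of_gt hb),
        Real.log_mul (by linarith : (1:ℝ) - L ≠ 0) (ne_of_gt hD)]
      ring
    rw [e1, e2] at hmain
    have e3 : Real.log (L / p) = Real.log L - Real.log p := Real.log_div (ne_of_gt hLpos) (ne_of_gt hp0)
    have e4 : Real.log ((1 - L) / (1 - p)) = Real.log (1 - L) - Real.log (1 - p) :=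
      Real.log_div (by linarith) (ne_of_gt hb)
    rw [e3, e4]
    nlinarith [hmain]

lemma aux_upper (L ξ C p : ℝ) (hL0 : 0 ≤ L) (hL1 : L < 1) (hξ : 0 < ξ) (hC : 0 < C)
    (hp0 : 0 ≤ p) (hp1 : p < 1)
    (hf : L * Real.log (L / p) + (1 - L) * Real.log ((1 - L) / (1 - p)) ≤ ξ) :
    p ≤ (1 - Real.exp (-C * L - ξ)) / (1 - Real.exp (-C)) := by
  have hd : 0 < 1 - Real.exp (-C) := by
    have : Real.exp (-C) < 1 := Real.exp_lt_one_iff.mpr (by linarith)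
    linarith
  have hnum : 0 < 1 - Real.exp (-C * L - ξ) := by
    have : Real.exp (-C * L - ξ) < 1 := Real.exp_lt_one_iff.mpr (by nlinarith)
    linarith
  rcases eq_or_lt_of_le hp0 with h | hp0'
  · rw [← h]; positivity
  · rw [le_div_iff₀ hd]
    have hD : 0 < 1 - p + p * Real.exp (-C) := by nlinarith [Real.exp_pos (-C)]
    have key : -C * L - ξ ≤ Real.log (1 - p + p * Real.exp (-C)) := by
      have := aux_dv L p C hL0 hL1 hp0' hp1
      linarith
    have := Real.exp_le_exp.mpr key
    rw [Real.exp_log hD] at this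
    nlinarith

lemma aux_witness (L ξ p : ℝ) (hL0 : 0 < L) (hLp : L < p) (hp1 : p < 1)
    (hξ : ξ = L * Real.log (L / p) + (1 - L) * Real.log ((1 - L) / (1 - p))) :
    ∃ C : ℝ, 0 < C ∧ p = (1 - Real.exp (-C * L - ξ)) / (1 - Real.exp (-C)) := by
  have hp0 : 0 < p := lt_trans hL0 hLp
  have hb : 0 < 1 - p := by linarith
  have hbL : 0 < 1 - L := by linarith
  set X := p * (1 - L) / (L * (1 - p)) with hX_def
  have hX1 : 1 < X := by
    rw [hX_def, lt_div_iff₀ (by positivity)]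
    nlinarith
  refine ⟨Real.log X, Real.log_pos hX1, ?_⟩
  have hXpos : 0 < X := by positivity
  have e1 : Real.exp (-Real.log X) = L * (1 - p) / (p * (1 - L)) := by
    rw [Real.exp_neg, Real.exp_log hXpos, hX_def]
    rw [inv_div]
  have e2 : -Real.log X * L - ξ = Real.log ((1 - p) / (1 - L)) := by
    rw [hξ, hX_def, Real.log_div (by positivity) (by positivity),
      Real.log_mul hp0.ne' hbL.ne', Real.log_mul hL0.ne' hb.ne',
      Real.log_div hL0.ne' hp0.ne', Real.log_div hbL.ne' hb.ne', Real.log_div hb.ne' hbL.ne']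
    ring
  have e3 : Real.exp (-Real.log X * L - ξ) = (1 - p) / (1 - L) := by
    rw [e2, Real.exp_log (by positivity)]
  rw [e3, e1]
  rw [eq_div_iff]
  · field_simp
    ring
  · have : L * (1 - p) / (p * (1 - L)) < 1 := by
      rw [div_lt_one (by positivity)]; nlinarith
    intro h
    have : (1:ℝ) - L * (1 - p) / (p * (1 - L)) = 0 := h
    linarith

noncomputable def fKL (L p : ℝ) : ℝ :=
  L * Real.log (L / p) + (1 - L) * Real.log ((1 - L) / (1 - p))

lemma aux_pstar (L ξ : ℝ) (hL0 : 0 < L) (hL1 : L < 1) (hξ : 0 < ξ) :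
    ∃ p, L < p ∧ p < 1 ∧ fKL L p = ξ ∧ ∀ q, p < q → q < 1 → ξ < fKL L q := by
  have hbL : 0 < 1 - L := by linarith
  set g : ℝ → ℝ := fun p =>
    L * Real.log L + (1 - L) * Real.log (1 - L) - L * Real.log p - (1 - L) * Real.log (1 - p)
    with hg_def
  have heq : ∀ p, 0 < p → p < 1 → fKL L p = g p := by
    intro p hp0 hp1
    simp only [fKL, hg_def, Real.log_div hL0.ne' hp0.ne',
      Real.log_div hbL.ne' (by linarith : (1:ℝ) - p ≠ 0)]
    ring
  have hderiv : ∀ x ∈ Set.Ioo L 1, HasDerivAt g (-(L / x) + (1 - L) / (1 - x)) x := by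
    intro x hx
    have hx0 : 0 < x := lt_trans hL0 hx.1
    have hx1 : 0 < 1 - x := by linarith [hx.2]
    have d1 : HasDerivAt (fun p : ℝ => Real.log p) x⁻¹ x := Real.hasDerivAt_log hx0.ne'
    have d2 : HasDerivAt (fun p : ℝ => 1 - p) (-1) x := by
      simpa using (hasDerivAt_id x).const_sub 1
    have d3 : HasDerivAt (fun p : ℝ => Real.log (1 - p)) ((1 - x)⁻¹ * (-1)) x :=
      (Real.hasDerivAt_log hx1.ne').comp x d2
    have := ((d1.const_mul L).const_sub (L * Real.log L + (1 - L) * Real.log (1 - L))).sub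
      (d3.const_mul (1 - L))
    have hval : -(L / x) + (1 - L) / (1 - x) = -(L * x⁻¹) - (1 - L) * ((1 - x)⁻¹ * (-1)) := by
      field_simp
      ring
    rw [hval]
    exact this
  have hcont : ContinuousOn g (Set.Ico L 1) := by
    intro x hx
    have hx0 : 0 < x := lt_of_lt_of_le hL0 hx.1
    have hx1 : 0 < 1 - x := by linarith [hx.2]
    apply ContinuousAt.continuousWithinAt
    have c1 : ContinuousAt (fun p : ℝ => Real.log p) x := Real.continuousAt_log hx0.ne'
    have c2 : ContinuousAt (fun p : ℝ => Real.log (1 - p)) x :=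
      (Real.continuousAt_log hx1.ne').comp (by fun_prop)
    exact ((continuousAt_const.sub (c1.const_mul L)).sub (c2.const_mul (1 - L)))
  have hmono : StrictMonoOn g (Set.Ico L 1) := by
    apply strictMonoOn_of_deriv_pos (convex_Ico L 1) hcont
    intro x hx
    rw [interior_Ico] at hx
    rw [(hderiv x hx).deriv]
    have hx0 : 0 < x := lt_trans hL0 hx.1
    have hx1 : 0 < 1 - x := by linarith [hx.2]
    rw [neg_add_eq_sub, sub_pos, div_lt_div_iff₀ hx0 hx1]
    nlinarith [hx.1]
  obtain ⟨b, hLb, hb1, hgb⟩ : ∃ b, L < b ∧ b < 1 ∧ ξ ≤ g b := by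
    set M := max ((ξ - L * Real.log L - (1 - L) * Real.log (1 - L)) / (1 - L)) 1 with hM_def
    have hM1 : (1:ℝ) ≤ M := le_max_right _ _
    set b := max (1 - Real.exp (-M)) ((L + 1) / 2) with hb_def
    have hbL' : L < b := lt_of_lt_of_le (by linarith) (le_max_right _ _)
    have hb1' : b < 1 := by
      apply max_lt
      · have := Real.exp_pos (-M); linarith
      · linarith
    refine ⟨b, hbL', hb1', ?_⟩
    have hb0 : 0 < b := lt_trans hL0 hbL'
    have h1b : 0 < 1 - b := by linarith
    have hlogb : Real.log b ≤ 0 := Real.log_nonpos hb0.le hb1'.le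
    have hlog1b : Real.log (1 - b) ≤ -M := by
      have : 1 - b ≤ Real.exp (-M) := by
        have := le_max_left (1 - Real.exp (-M)) ((L + 1) / 2)
        linarith [this.trans_eq hb_def.symm]
      calc Real.log (1 - b) ≤ Real.log (Real.exp (-M)) := Real.log_le_log h1b this
        _ = -M := Real.log_exp _
    have hMK : (ξ - L * Real.log L - (1 - L) * Real.log (1 - L)) / (1 - L) ≤ M := le_max_left _ _
    have : ξ - L * Real.log L - (1 - L) * Real.log (1 - L) ≤ (1 - L) * M := by
      rw [div_le_iff₀ hbL] at hMK; linarith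
    simp only [hg_def]
    nlinarith [mul_le_mul_of_nonneg_left hlog1b (le_of_lt hbL),
      mul_le_mul_of_nonneg_left hlogb hL0.le]
  have hgL : g L = 0 := by
    rw [← heq L hL0 hL1]
    simp [fKL, div_self hL0.ne', div_self hbL.ne']
  have hsub : Set.Icc L b ⊆ Set.Ico L 1 := fun x hx => ⟨hx.1, lt_of_le_of_lt hx.2 hb1⟩
  have hivt := intermediate_value_Icc (le_of_lt hLb) (hcont.mono hsub)
  have hmem : ξ ∈ Set.Icc (g L) (g b) := by rw [hgL]; exact ⟨hξ.le, hgb⟩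
  obtain ⟨p, hp_mem, hp_eq⟩ := hivt hmem
  have hp1 : p < 1 := lt_of_le_of_lt hp_mem.2 hb1
  have hpL : L < p := by
    rcases eq_or_lt_of_le hp_mem.1 with h | h
    · exfalso; rw [← h] at hp_eq; rw [hgL] at hp_eq; linarith
    · exact h
  refine ⟨p, hpL, hp1, ?_, ?_⟩
  · rw [heq p (lt_trans hL0 hpL) hp1]; exact hp_eq
  · intro q hpq hq1
    have hq0 : 0 < q := lt_trans (lt_trans hL0 hpL) hpq
    rw [heq q hq0 hq1, ← hp_eq]
    exact hmono ⟨hpL.le, hp1⟩ ⟨(hpL.trans hpq).le, hq1⟩ hpq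

/-- Binary KL divergence, extended-real valued: `kl(q‖1) = ⊤` for `q < 1`. -/
noncomputable def klBin (q p : ℝ) : EReal :=
  if q < 1 ∧ p = 1 then ⊤
  else ((q * Real.log (q / p) + (1 - q) * Real.log ((1 - q) / (1 - p)) : ℝ) : EReal)

lemma klBin_ne_one (L p : ℝ) (hp : p ≠ 1) :
    klBin L p = ((L * Real.log (L / p) + (1 - L) * Real.log ((1 - L) / (1 - p)) : ℝ) : EReal) := by
  rw [klBin, if_neg]
  tauto

/-- For `0 ≤ L < 1` and `ξ > 0`,
`sup{p ∈ [0,1] : kl(L‖p) ≤ ξ} = inf_{C>0} (1 - exp(-C L - ξ)) / (1 - e^{-C})`. -/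
theorem statement4 (L ξ : ℝ) (hL0 : 0 ≤ L) (hL1 : L < 1) (hξ : 0 < ξ) :
    sSup {p : ℝ | p ∈ Set.Icc (0 : ℝ) 1 ∧ klBin L p ≤ (ξ : EReal)}
      = sInf {y : ℝ | ∃ C : ℝ, 0 < C ∧
          y = (1 - Real.exp (-C * L - ξ)) / (1 - Real.exp (-C))} := by
  set A := {p : ℝ | p ∈ Set.Icc (0 : ℝ) 1 ∧ klBin L p ≤ (ξ : EReal)} with hA_def
  set B := {y : ℝ | ∃ C : ℝ, 0 < C ∧
      y = (1 - Real.exp (-C * L - ξ)) / (1 - Real.exp (-C))} with hB_def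
  -- basic facts about A
  have hAlt1 : ∀ p ∈ A, p < 1 := by
    intro p hp
    rcases lt_or_eq_of_le hp.1.2 with h | h
    · exact h
    · exfalso
      have := hp.2
      rw [h, klBin, if_pos ⟨hL1, rfl⟩] at this
      exact absurd this (by simp)
  have hAreal : ∀ p ∈ A, L * Real.log (L / p) + (1 - L) * Real.log ((1 - L) / (1 - p)) ≤ ξ := by
    intro p hp
    have h1 := hAlt1 p hp
    have := hp.2
    rw [klBin_ne_one L p h1.ne] at this
    exact_mod_cast this
  have hAne : A.Nonempty := by
    refine ⟨0, ⟨le_refl 0, zero_le_one⟩, ?_⟩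
    rw [klBin_ne_one L 0 (by norm_num)]
    have : L * Real.log (L / 0) + (1 - L) * Real.log ((1 - L) / (1 - 0)) ≤ ξ := by
      have e0 : L / 0 = 0 := div_zero L
      have e1 : (1 - L) / ((1:ℝ) - 0) = 1 - L := by norm_num
      rw [e0, e1, Real.log_zero]
      have h1 : Real.log (1 - L) ≤ 0 := Real.log_nonpos (by linarith) (by linarith)
      nlinarith [h1]
    exact_mod_cast this
  have hAbdd : BddAbove A := ⟨1, fun p hp => hp.1.2⟩
  have hBbdd : BddBelow B := by
    refine ⟨0, fun y hy => ?_⟩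
    obtain ⟨C, hC, rfl⟩ := hy
    have hd : 0 < 1 - Real.exp (-C) := by
      have : Real.exp (-C) < 1 := Real.exp_lt_one_iff.mpr (by linarith)
      linarith
    have hnum : 0 < 1 - Real.exp (-C * L - ξ) := by
      have : Real.exp (-C * L - ξ) < 1 := Real.exp_lt_one_iff.mpr (by nlinarith)
      linarith
    positivity
  have hBne : B.Nonempty :=
    ⟨(1 - Real.exp (-1 * L - ξ)) / (1 - Real.exp (-1)), 1, one_pos, rfl⟩
  -- direction 1 : sSup A ≤ sInf B
  have dir1 : sSup A ≤ sInf B := by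
    apply le_csInf hBne
    rintro y ⟨C, hC, rfl⟩
    apply csSup_le hAne
    intro p hp
    exact aux_upper L ξ C p hL0 hL1 hξ hC hp.1.1 (hAlt1 p hp) (hAreal p hp)
  -- direction 2
  rcases eq_or_lt_of_le hL0 with hLzero | hLpos
  · -- L = 0
    subst hLzero
    set q := 1 - Real.exp (-ξ) with hq_def
    have hexp1 : Real.exp (-ξ) < 1 := Real.exp_lt_one_iff.mpr (by linarith)
    have hexp0 : 0 < Real.exp (-ξ) := Real.exp_pos _
    have hq0 : 0 < q := by rw [hq_def]; linarith
    have hq1 : q < 1 := by rw [hq_def]; linarith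
    have hqA : q ∈ A := by
      refine ⟨⟨hq0.le, hq1.le⟩, ?_⟩
      rw [klBin_ne_one 0 q hq1.ne]
      have : (0:ℝ) * Real.log (0 / q) + (1 - 0) * Real.log ((1 - 0) / (1 - q)) = ξ := by
        have h1q : 1 - q = Real.exp (-ξ) := by rw [hq_def]; ring
        rw [h1q]
        simp [Real.log_div one_ne_zero (Real.exp_ne_zero _), Real.log_exp]
      rw [this]
    have hsup : sSup A = q := by
      apply le_antisymm
      · apply csSup_le hAne
        intro p hp
        have hp1 : p < 1 := hAlt1 p hp
        have := hAreal p hp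
        simp only [zero_mul, sub_zero, one_mul, zero_div, zero_add] at this
        have hlog : Real.log ((1:ℝ) / (1 - p)) = -Real.log (1 - p) := by
          rw [one_div, Real.log_inv]
        rw [hlog] at this
        have h1p : 0 < 1 - p := by linarith
        have : Real.exp (-ξ) ≤ 1 - p := by
          have h2 := Real.exp_le_exp.mpr (show -ξ ≤ Real.log (1 - p) by linarith)
          rwa [Real.exp_log h1p] at h2
        rw [hq_def]; linarith
      · exact le_csSup hAbdd hqA
    rw [hsup]
    refine le_antisymm ((le_of_eq hsup.symm).trans dir1) ?_
    apply le_of_forall_pos_le_add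
    intro ε hε
    set C := Real.log ((q + ε) / ε) with hC_def
    have hrat : 1 < (q + ε) / ε := by
      rw [lt_div_iff₀ hε]; linarith
    have hC : 0 < C := Real.log_pos hrat
    have hexpC : Real.exp (-C) = ε / (q + ε) := by
      rw [hC_def, Real.exp_neg, Real.exp_log (by positivity), inv_div]
    have hy : (1 - Real.exp (-C * 0 - ξ)) / (1 - Real.exp (-C)) = q + ε := by
      rw [hexpC]
      have h1 : -C * 0 - ξ = -ξ := by ring
      rw [h1]
      have h2 : 1 - Real.exp (-ξ) = q := by rw [hq_def]
      rw [h2]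
      rw [div_eq_iff]
      · field_simp
        ring
      · have : ε / (q + ε) < 1 := by rw [div_lt_one (by linarith)]; linarith
        intro h
        have : (1:ℝ) - ε / (q + ε) = 0 := h
        linarith
    calc sInf B ≤ (1 - Real.exp (-C * 0 - ξ)) / (1 - Real.exp (-C)) :=
          csInf_le hBbdd ⟨C, hC, rfl⟩
      _ = q + ε := hy
  · -- L > 0
    obtain ⟨p, hLp, hp1, hfp, hmore⟩ := aux_pstar L ξ hLpos hL1 hξ
    have hpA : p ∈ A := by
      refine ⟨⟨by linarith, hp1.le⟩, ?_⟩
      rw [klBin_ne_one L p hp1.ne]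
      have : L * Real.log (L / p) + (1 - L) * Real.log ((1 - L) / (1 - p)) ≤ ξ := by
        rw [show L * Real.log (L / p) + (1 - L) * Real.log ((1 - L) / (1 - p)) = fKL L p from rfl,
          hfp]
      exact_mod_cast this
    have hsup : sSup A = p := by
      apply le_antisymm
      · apply csSup_le hAne
        intro x hx
        by_contra hcon
        push_neg at hcon
        have hx1 : x < 1 := hAlt1 x hx
        have := hmore x hcon hx1
        have h2 := hAreal x hx
        rw [show L * Real.log (L / x) + (1 - L) * Real.log ((1 - L) / (1 - x)) = fKL L x from rfl]
          at h2
        linarith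
      · exact le_csSup hAbdd hpA
    obtain ⟨C, hC, hpe⟩ := aux_witness L ξ p hLpos hLp hp1 hfp.symm
    rw [hsup]
    exact le_antisymm ((le_of_eq hsup.symm).trans dir1) (csInf_le hBbdd ⟨C, hC, hpe⟩)
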